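/- Let a finite MDP (S, A, T, μ, γ) be given and let π be a stationary policy whose occupancy measure ρ_π satisfies ∑_{a∈A} ρ_π(s,a) > 0 for every s ∈ S. Then π is recovered from its occupancy measure via π(a|s) = ρ_π(s,a) / ∑_{a'∈A} ρ_π(s,a'). Consequently, if two stationary policies π and π' have the same occupancy measure and that occupancy measure has strictly positive state marginals, then π = π'. -/
import Mathlib


open scoped BigOperators

/-- The time-`t` state-action distribution of a stationary policy `π` in a finite MDP
with transition kernel `T` (with `T s a s'` the probability of moving to `s'` from `(s,a)`)
and initial state distribution `μ`:
`P_π^0(s,a) = μ(s)·π(a|s)` and `P_π^{t+1}(s,a) = π(a|s)·∑_{s',a'} T(s|s',a')·P_π^t(s',a')`. -/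
noncomputable def stepDist {S A : Type} [Fintype S] [Fintype A]
    (T : S → A → S → ℝ) (μ : S → ℝ) (π : S → A → ℝ) : ℕ → S → A → ℝ
  | 0 => fun s a => μ s * π s a
  | (t + 1) => fun s a => π s a * ∑ s' : S, ∑ a' : A, T s' a' s * stepDist T μ π t s' a'

/-- The (discounted) occupancy measure of a stationary policy `π`:
`ρ_π(s,a) = ∑_{t=0}^∞ γ^t · P_π^t(s,a)`. -/
noncomputable def occupancy {S A : Type} [Fintype S] [Fintype A]
    (T : S → A → S → ℝ) (μ : S → ℝ) (γ : ℝ) (π : S → A → ℝ) (s : S) (a : A) : ℝ :=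
  ∑' t : ℕ, γ ^ t * stepDist T μ π t s a

/-- State marginal of the time-`t` distribution. -/
noncomputable def mstep {S A : Type} [Fintype S] [Fintype A]
    (T : S → A → S → ℝ) (μ : S → ℝ) (π : S → A → ℝ) : ℕ → S → ℝ
  | 0 => μ
  | (t + 1) => fun s => ∑ s' : S, ∑ a' : A, T s' a' s * stepDist T μ π t s' a'

lemma stepDist_eq {S A : Type} [Fintype S] [Fintype A]
    (T : S → A → S → ℝ) (μ : S → ℝ) (π : S → A → ℝ) (t : ℕ) (s : S) (a : A) :
    stepDist T μ π t s a = π s a * mstep T μ π t s := by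
  cases t with
  | zero => simp [stepDist, mstep, mul_comm]
  | succ t => simp [stepDist, mstep]

lemma occupancy_eq {S A : Type} [Fintype S] [Fintype A]
    (T : S → A → S → ℝ) (μ : S → ℝ) (γ : ℝ) (π : S → A → ℝ) (s : S) (a : A) :
    occupancy T μ γ π s a = π s a * ∑' t : ℕ, γ ^ t * mstep T μ π t s := by
  unfold occupancy
  rw [← tsum_mul_left]
  congr 1
  funext t
  rw [stepDist_eq]
  ring

lemma occupancy_marginal {S A : Type} [Fintype S] [Fintype A]
    (T : S → A → S → ℝ) (μ : S → ℝ) (γ : ℝ) (π : S → A → ℝ)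
    (hπ_sum : ∀ s, ∑ a : A, π s a = 1) (s : S) :
    ∑ a : A, occupancy T μ γ π s a = ∑' t : ℕ, γ ^ t * mstep T μ π t s := by
  simp only [occupancy_eq, ← Finset.sum_mul, hπ_sum, one_mul]

theorem policy_recovered_from_occupancy
    {S A : Type} [Fintype S] [Nonempty S] [Fintype A] [Nonempty A]
    (T : S → A → S → ℝ) (μ : S → ℝ) (γ : ℝ)
    (hT_nonneg : ∀ s a s', 0 ≤ T s a s')
    (hT_sum : ∀ s a, ∑ s' : S, T s a s' = 1)
    (hμ_nonneg : ∀ s, 0 ≤ μ s) (hμ_sum : ∑ s : S, μ s = 1)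
    (hγ0 : 0 ≤ γ) (hγ1 : γ < 1)
    (π : S → A → ℝ)
    (hπ_nonneg : ∀ s a, 0 ≤ π s a) (hπ_sum : ∀ s, ∑ a : A, π s a = 1)
    (hpos : ∀ s, 0 < ∑ a : A, occupancy T μ γ π s a) :
    (∀ s a, π s a = occupancy T μ γ π s a / ∑ a' : A, occupancy T μ γ π s a') ∧
    (∀ π' : S → A → ℝ, (∀ s a, 0 ≤ π' s a) → (∀ s, ∑ a : A, π' s a = 1) →
      (∀ s a, occupancy T μ γ π' s a = occupancy T μ γ π s a) → π' = π) := by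
  have key : ∀ s a, occupancy T μ γ π s a = π s a * ∑ a' : A, occupancy T μ γ π s a' := by
    intro s a
    rw [occupancy_marginal T μ γ π hπ_sum, occupancy_eq]
  constructor
  · intro s a
    rw [key s a]
    field_simp [ne_of_gt (hpos s)]
  · intro π' hπ'_nonneg hπ'_sum hocc
    have key' : ∀ s a, occupancy T μ γ π' s a = π' s a * ∑ a' : A, occupancy T μ γ π' s a' := by
      intro s a
      rw [occupancy_marginal T μ γ π' hπ'_sum, occupancy_eq]
    funext s a
    have hsum : ∑ a' : A, occupancy T μ γ π' s a' = ∑ a' : A, occupancy T μ γ π s a' :=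
      Finset.sum_congr rfl fun a' _ => hocc s a'
    have h1 := key' s a
    rw [hsum, hocc s a, key s a] at h1
    exact (mul_right_cancel₀ (ne_of_gt (hpos s)) h1.symm)
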